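/- For every integer n ≥ 0 and every x ∈ (−1,1), the Cauchy principal value (1/π)·lim_{ρ→0⁺} ∫_{{y ∈ (−1,1) : |y−x| > ρ}} U_n(y)·√(1−y²)/(y−x) dy equals −T_{n+1}(x). -/

import Mathlib

open MeasureTheory Filter Set Polynomial

private lemma hc_integrable_inv_sqrt :
    IntegrableOn (fun y : ℝ => (Real.sqrt (1 - y ^ 2))⁻¹) (Ioo (-1 : ℝ) 1) := by
  have h := intervalIntegral.integrableOn_deriv_of_nonneg (g := Real.arcsin)
    (g' := fun y : ℝ => (Real.sqrt (1 - y ^ 2))⁻¹) (a := -1) (b := 1)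
    (Real.continuous_arcsin.continuousOn)
    (fun y hy => by
      simpa [one_div] using Real.hasDerivAt_arcsin (ne_of_gt hy.1) (ne_of_lt hy.2))
    (fun y hy => by positivity)
  exact h.mono_set Ioo_subset_Ioc_self

private lemma hc_S_eq {x ρ : ℝ} (hx1 : -1 < x) (hx2 : x < 1) (hρ : 0 ≤ ρ) :
    {y : ℝ | y ∈ Ioo (-1 : ℝ) 1 ∧ ρ < |y - x|}
      = Ioo (-1 : ℝ) (x - ρ) ∪ Ioo (x + ρ) 1 := by
  ext y
  simp only [mem_setOf_eq, mem_Ioo, mem_union, lt_abs]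
  constructor
  · rintro ⟨⟨h1, h2⟩, h3 | h3⟩
    · right; constructor <;> linarith
    · left; constructor <;> linarith
  · rintro (⟨h1, h2⟩ | ⟨h1, h2⟩)
    · exact ⟨⟨h1, by linarith⟩, Or.inr (by linarith)⟩
    · exact ⟨⟨by linarith, h2⟩, Or.inl (by linarith)⟩

private lemma hc_S_meas {x ρ : ℝ} :
    MeasurableSet {y : ℝ | y ∈ Ioo (-1 : ℝ) 1 ∧ ρ < |y - x|} := by
  have : {y : ℝ | y ∈ Ioo (-1 : ℝ) 1 ∧ ρ < |y - x|}
      = Ioo (-1 : ℝ) 1 ∩ {y : ℝ | ρ < |y - x|} := rfl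
  rw [this]
  exact measurableSet_Ioo.inter
    ((isOpen_lt continuous_const (by fun_prop)).measurableSet)

/-- shrink lemma -/
private lemma hc_shrink {x : ℝ} {g : ℝ → ℝ} (hg : IntegrableOn g (Ioo (-1 : ℝ) 1)) :
    Tendsto (fun ρ : ℝ => ∫ y in {y : ℝ | y ∈ Ioo (-1 : ℝ) 1 ∧ ρ < |y - x|}, g y)
      (nhdsWithin 0 (Set.Ioi 0)) (nhds (∫ y in Ioo (-1 : ℝ) 1, g y)) := by
  have hmeas : ∀ ρ : ℝ, MeasurableSet {y : ℝ | ρ < |y - x|} := fun ρ =>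
    (isOpen_lt continuous_const (by fun_prop)).measurableSet
  have hrw : ∀ ρ : ℝ, (∫ y in {y : ℝ | y ∈ Ioo (-1 : ℝ) 1 ∧ ρ < |y - x|}, g y)
      = ∫ y in Ioo (-1 : ℝ) 1, ({y : ℝ | ρ < |y - x|}).indicator g y := by
    intro ρ
    rw [setIntegral_indicator (hmeas ρ)]
    rfl
  simp only [hrw]
  apply tendsto_integral_filter_of_dominated_convergence (fun y => ‖g y‖)
  · exact Eventually.of_forall fun ρ => (hg.aestronglyMeasurable).indicator (hmeas ρ)
  · exact Eventually.of_forall fun ρ => Eventually.of_forall fun y =>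
      norm_indicator_le_norm_self _ _
  · exact hg.norm
  · have hne : ∀ᵐ y ∂(volume.restrict (Ioo (-1 : ℝ) 1)), y ≠ x := by
      refine (ae_restrict_of_ae ?_)
      have : ({x} : Set ℝ) =ᵐ[volume] (∅ : Set ℝ) := by
        simp [measure_singleton]
      filter_upwards [measure_eq_zero_iff_ae_notMem.mp (measure_singleton x)] with y hy
      simpa using hy
    filter_upwards [hne] with y hy
    have hpos : 0 < |y - x| := abs_pos.mpr (sub_ne_zero.mpr hy)
    apply Tendsto.congr' _ (tendsto_const_nhds (x := g y))
    filter_upwards [Ioo_mem_nhdsGT_of_mem ⟨le_refl (0:ℝ), hpos⟩] with ρ hρ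
    exact (indicator_of_mem (by exact hρ.2) g).symm

private lemma hc_integrableOn_div {x ρ : ℝ} (hρ : 0 < ρ) {c : ℝ → ℝ} (hc : Continuous c) :
    IntegrableOn (fun y => c y / (y - x)) {y : ℝ | y ∈ Ioo (-1 : ℝ) 1 ∧ ρ < |y - x|} := by
  set S := {y : ℝ | y ∈ Ioo (-1 : ℝ) 1 ∧ ρ < |y - x|} with hS
  obtain ⟨M, hM⟩ := (isCompact_Icc (a := (-1:ℝ)) (b := 1)).exists_bound_of_continuousOn
    hc.continuousOn
  have hμ : volume S < ⊤ := by
    apply lt_of_le_of_lt (measure_mono (fun y hy => hy.1 : S ⊆ Ioo (-1:ℝ) 1))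
    simp [Real.volume_Ioo]
  apply Integrable.mono' (g := fun _ => M / ρ)
  · exact integrableOn_const hμ.ne
  · exact ((hc.measurable.div ((measurable_id.sub_const x))).aestronglyMeasurable).restrict
  · rw [ae_restrict_iff' hc_S_meas]
    refine Eventually.of_forall fun y hy => ?_
    have h1 : |c y| ≤ M := hM y (Ioo_subset_Icc_self hy.1)
    have h2 : ρ ≤ |y - x| := le_of_lt hy.2
    have : ‖c y / (y - x)‖ = |c y| / |y - x| := by
      rw [Real.norm_eq_abs, abs_div]
    rw [this]
    exact div_le_div₀ (le_trans (abs_nonneg _) h1) h1 hρ h2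

private lemma hc_integrableOn_S {x ρ : ℝ} {c : ℝ → ℝ} (hc : Continuous c) :
    IntegrableOn c {y : ℝ | y ∈ Ioo (-1 : ℝ) 1 ∧ ρ < |y - x|} := by
  exact (hc.integrableOn_Icc (a := -1) (b := 1)).mono_set (fun y hy => Ioo_subset_Icc_self hy.1)

private lemma hc_int_cos_k {k : ℕ} (hk : 1 ≤ k) :
    ∫ t in (0:ℝ)..Real.pi, Real.cos (k * t) = 0 := by
  have hk0 : (k : ℝ) ≠ 0 := Nat.cast_ne_zero.mpr (by omega)
  rw [intervalIntegral.integral_comp_mul_left (fun t => Real.cos t) hk0]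
  simp [Real.sin_nat_mul_pi]

private lemma hc_intU {m : ℕ} :
    ∫ y in Ioo (-1 : ℝ) 1, (Polynomial.Chebyshev.U ℝ m).eval y * Real.sqrt (1 - y ^ 2)
      = if m = 0 then Real.pi / 2 else 0 := by
  have hgc : Continuous (fun y : ℝ => (Polynomial.Chebyshev.U ℝ m).eval y * Real.sqrt (1 - y ^ 2)) :=
    (Polynomial.continuous _).mul (Real.continuous_sqrt.comp (by fun_prop))
  have h1 : ∫ y in Ioo (-1 : ℝ) 1, (Polynomial.Chebyshev.U ℝ m).eval y * Real.sqrt (1 - y ^ 2)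
      = ∫ y in (-1 : ℝ)..1, (Polynomial.Chebyshev.U ℝ m).eval y * Real.sqrt (1 - y ^ 2) := by
    rw [intervalIntegral.integral_of_le (by norm_num), integral_Ioc_eq_integral_Ioo]
  have h2 := intervalIntegral.integral_comp_mul_deriv (f := Real.cos)
      (f' := fun t => -Real.sin t) (a := 0) (b := Real.pi)
      (g := fun y => (Polynomial.Chebyshev.U ℝ m).eval y * Real.sqrt (1 - y ^ 2))
      (fun t _ => Real.hasDerivAt_cos t) (by fun_prop) hgc
  rw [Real.cos_zero, Real.cos_pi] at h2
  have h3 : ∀ t ∈ Icc (0:ℝ) Real.pi,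
      ((fun y => (Polynomial.Chebyshev.U ℝ m).eval y * Real.sqrt (1 - y ^ 2)) ∘ Real.cos) t
        * (-Real.sin t)
      = -(1/2) * (Real.cos (m * t) - Real.cos ((m + 2) * t)) := by
    intro t ht
    have hsin : 0 ≤ Real.sin t := Real.sin_nonneg_of_nonneg_of_le_pi ht.1 ht.2
    have hsq : Real.sqrt (1 - Real.cos t ^ 2) = Real.sin t := by
      rw [show (1 : ℝ) - Real.cos t ^ 2 = Real.sin t ^ 2 by
        have := Real.sin_sq_add_cos_sq t; linarith]
      exact Real.sqrt_sq hsin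
    have hU := Polynomial.Chebyshev.U_real_cos t m
    push_cast at hU
    have key : Real.sin (((m:ℝ)+1)*t) * Real.sin t
        = (1/2) * (Real.cos ((m:ℝ) * t) - Real.cos (((m:ℝ) + 2) * t)) := by
      have := Real.cos_sub_cos ((m:ℝ) * t) (((m:ℝ) + 2) * t)
      rw [show ((m:ℝ) * t - ((m:ℝ)+2)*t)/2 = -t by ring,
        show ((m:ℝ) * t + ((m:ℝ)+2)*t)/2 = ((m:ℝ)+1)*t by ring, Real.sin_neg] at this
      linarith
    simp only [Function.comp_apply]
    have e1 : (Polynomial.Chebyshev.U ℝ (m:ℤ)).eval (Real.cos t) * Real.sqrt (1 - Real.cos t ^ 2)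
        * (-Real.sin t)
        = -(((Polynomial.Chebyshev.U ℝ (m:ℤ)).eval (Real.cos t) * Real.sin t) * Real.sin t) := by
      rw [hsq]; ring
    rw [e1, hU, key]; ring
  rw [h1, intervalIntegral.integral_symm 1 (-1), ← h2, neg_eq_iff_eq_neg]
  rw [intervalIntegral.integral_congr
    (g := fun t => -(1/2) * (Real.cos (m * t) - Real.cos ((m + 2) * t)))
    (fun t ht => h3 t (by rwa [uIcc_of_le Real.pi_nonneg] at ht))]
  have hi1 : IntervalIntegrable (fun t => Real.cos ((m:ℝ) * t)) volume 0 Real.pi :=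
    (Real.continuous_cos.comp (by fun_prop)).intervalIntegrable _ _
  have hi2 : IntervalIntegrable (fun t => Real.cos (((m:ℝ) + 2) * t)) volume 0 Real.pi :=
    (Real.continuous_cos.comp (by fun_prop)).intervalIntegrable _ _
  rw [intervalIntegral.integral_const_mul, intervalIntegral.integral_sub hi1 hi2]
  have e2 : ∫ t in (0:ℝ)..Real.pi, Real.cos (((m:ℝ)+2) * t) = 0 := by
    have := hc_int_cos_k (k := m + 2) (by omega)
    push_cast at this
    exact this
  rcases Nat.eq_zero_or_pos m with hm | hm
  · subst hm
    simp only [Nat.cast_zero, zero_mul, Real.cos_zero, e2, if_pos]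
    rw [intervalIntegral.integral_const]
    simp
    ring
  · have e1 : ∫ t in (0:ℝ)..Real.pi, Real.cos ((m:ℝ) * t) = 0 := hc_int_cos_k hm
    rw [e1, e2]
    simp [if_neg (by omega : m ≠ 0)]

private noncomputable def hcD (x y : ℝ) : ℝ :=
  1 - x * y + Real.sqrt (1 - x ^ 2) * Real.sqrt (1 - y ^ 2)

private lemma hcD_cont {x : ℝ} : Continuous (hcD x) := by
  unfold hcD; fun_prop

private lemma hcD_pos {x y : ℝ} (hx1 : -1 < x) (hx2 : x < 1) (hy1 : -1 ≤ y) (hy2 : y ≤ 1) :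
    0 < hcD x y := by
  have h1 : x * y ≤ |x| * |y| := le_trans (le_abs_self _) (by rw [abs_mul])
  have h2 : |x| < 1 := abs_lt.mpr ⟨hx1, hx2⟩
  have h3 : |y| ≤ 1 := abs_le.mpr ⟨hy1, hy2⟩
  have h4 : |x| * |y| < 1 := by nlinarith [abs_nonneg x, abs_nonneg y]
  have h5 : 0 ≤ Real.sqrt (1 - x ^ 2) * Real.sqrt (1 - y ^ 2) := by positivity
  unfold hcD; nlinarith

private lemma hcD_deriv {x y : ℝ} (hy1 : -1 < y) (hy2 : y < 1) :
    HasDerivAt (hcD x)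
      (-x + Real.sqrt (1 - x ^ 2) * ((-2 * y) / (2 * Real.sqrt (1 - y ^ 2)))) y := by
  have hne : (1 : ℝ) - y ^ 2 ≠ 0 := by nlinarith
  have h1 : HasDerivAt (fun y : ℝ => 1 - y ^ 2) (-2 * y) y := by
    simpa using ((hasDerivAt_pow 2 y).const_sub 1)
  have h2 : HasDerivAt (fun y : ℝ => Real.sqrt (1 - y ^ 2))
      (1 / (2 * Real.sqrt (1 - y ^ 2)) * (-2 * y)) y :=
    (Real.hasDerivAt_sqrt hne).comp y h1
  have h3 : HasDerivAt (fun y : ℝ => 1 - x * y) (-x) y := by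
    simpa using ((hasDerivAt_id y).const_mul x).const_sub 1
  have := h3.add (h2.const_mul (Real.sqrt (1 - x ^ 2)))
  unfold hcD
  refine this.congr_deriv ?_
  ring

/-- derivative of the log antiderivative, right branch (y > x) -/
private lemma hcG_deriv_right {x y : ℝ} (hx1 : -1 < x) (hx2 : x < 1)
    (hxy : x < y) (hy2 : y < 1) :
    HasDerivAt (fun y => (Real.sqrt (1 - x ^ 2))⁻¹ * (Real.log (y - x) - Real.log (hcD x y)))
      (((y - x) * Real.sqrt (1 - y ^ 2))⁻¹) y := by
  have hy1 : (-1 : ℝ) < y := lt_trans hx1 hxy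
  have hw : 0 < Real.sqrt (1 - y ^ 2) := Real.sqrt_pos.mpr (by nlinarith)
  have hs : 0 < Real.sqrt (1 - x ^ 2) := Real.sqrt_pos.mpr (by nlinarith)
  have hD : 0 < hcD x y := hcD_pos hx1 hx2 (le_of_lt hy1) (le_of_lt hy2)
  have h1 : HasDerivAt (fun y : ℝ => Real.log (y - x)) (1 / (y - x)) y := by
    have : HasDerivAt (fun y : ℝ => y - x) 1 y := (hasDerivAt_id y).sub_const x
    simpa [Function.comp_def] using (Real.hasDerivAt_log (by linarith : y - x ≠ 0)).comp y this
  have h2 : HasDerivAt (fun y => Real.log (hcD x y))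
      ((-x + Real.sqrt (1 - x ^ 2) * ((-2 * y) / (2 * Real.sqrt (1 - y ^ 2)))) / hcD x y) y := by
    have := (Real.hasDerivAt_log (ne_of_gt hD)).comp y (hcD_deriv hy1 hy2)
    refine this.congr_deriv ?_
    ring
  have h3 := (h1.sub h2).const_mul (Real.sqrt (1 - x ^ 2))⁻¹
  refine h3.congr_deriv ?_
  set w := Real.sqrt (1 - y ^ 2)
  set s := Real.sqrt (1 - x ^ 2)
  have hw2 : w ^ 2 = 1 - y ^ 2 := Real.sq_sqrt (by nlinarith)
  have hs2 : s ^ 2 = 1 - x ^ 2 := Real.sq_sqrt (by nlinarith)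
  have hDe : hcD x y = 1 - x * y + s * w := rfl
  rw [hDe]
  have hxy' : y - x ≠ 0 := by linarith
  have hwne : w ≠ 0 := ne_of_gt hw
  have hsne : s ≠ 0 := ne_of_gt hs
  have hDne : 1 - x * y + s * w ≠ 0 := by rw [hDe] at hD; exact ne_of_gt hD
  have hDne' : 1 - y * x + s * w ≠ 0 := by rw [mul_comm y x]; exact hDne
  field_simp
  linear_combination (-w)*hs2 + s*hw2

/-- derivative of the log antiderivative, left branch (y < x) -/
private lemma hcG_deriv_left {x y : ℝ} (hx1 : -1 < x) (hx2 : x < 1)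
    (hy1 : -1 < y) (hxy : y < x) :
    HasDerivAt (fun y => (Real.sqrt (1 - x ^ 2))⁻¹ * (Real.log (x - y) - Real.log (hcD x y)))
      (((y - x) * Real.sqrt (1 - y ^ 2))⁻¹) y := by
  have hy2 : y < 1 := lt_trans hxy hx2
  have hw : 0 < Real.sqrt (1 - y ^ 2) := Real.sqrt_pos.mpr (by nlinarith)
  have hs : 0 < Real.sqrt (1 - x ^ 2) := Real.sqrt_pos.mpr (by nlinarith)
  have hD : 0 < hcD x y := hcD_pos hx1 hx2 (le_of_lt hy1) (le_of_lt hy2)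
  have h1 : HasDerivAt (fun y : ℝ => Real.log (x - y)) (1 / (y - x)) y := by
    have hxy0 : x - y ≠ 0 := by linarith
    have hder : HasDerivAt (fun y : ℝ => x - y) (-1) y := by
      simpa using (hasDerivAt_id y).const_sub x
    have := (Real.hasDerivAt_log hxy0).comp y hder
    refine this.congr_deriv ?_
    field_simp
    rw [eq_div_iff (by intro h; linarith [sub_eq_zero.mp h] : y - x ≠ 0)]
    ring
  have h2 : HasDerivAt (fun y => Real.log (hcD x y))
      ((-x + Real.sqrt (1 - x ^ 2) * ((-2 * y) / (2 * Real.sqrt (1 - y ^ 2)))) / hcD x y) y := by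
    have := (Real.hasDerivAt_log (ne_of_gt hD)).comp y (hcD_deriv hy1 hy2)
    refine this.congr_deriv ?_
    ring
  have h3 := (h1.sub h2).const_mul (Real.sqrt (1 - x ^ 2))⁻¹
  refine h3.congr_deriv ?_
  set w := Real.sqrt (1 - y ^ 2)
  set s := Real.sqrt (1 - x ^ 2)
  have hw2 : w ^ 2 = 1 - y ^ 2 := Real.sq_sqrt (by nlinarith)
  have hs2 : s ^ 2 = 1 - x ^ 2 := Real.sq_sqrt (by nlinarith)
  have hDe : hcD x y = 1 - x * y + s * w := rfl
  rw [hDe]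
  have hxy' : y - x ≠ 0 := by intro h; linarith [sub_eq_zero.mp h]
  have hwne : w ≠ 0 := ne_of_gt hw
  have hsne : s ≠ 0 := ne_of_gt hs
  have hDne : 1 - x * y + s * w ≠ 0 := by rw [hDe] at hD; exact ne_of_gt hD
  have hDne' : 1 - y * x + s * w ≠ 0 := by rw [mul_comm y x]; exact hDne
  field_simp
  linear_combination (-w)*hs2 + s*hw2

private lemma hc_integrable_right {x ρ : ℝ} (hx1 : -1 < x) (hx2 : x < 1)
    (hρ : 0 < ρ) (hρ1 : x + ρ ≤ 1) :
    IntegrableOn (fun y => ((y - x) * Real.sqrt (1 - y ^ 2))⁻¹) (Ioc (x + ρ) 1) := by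
  apply intervalIntegral.integrableOn_deriv_of_nonneg
    (g := fun y => (Real.sqrt (1 - x ^ 2))⁻¹ * (Real.log (y - x) - Real.log (hcD x y)))
  · apply ContinuousOn.mul continuousOn_const
    apply ContinuousOn.sub
    · apply ContinuousOn.log ((continuous_id.sub continuous_const).continuousOn)
      intro y hy
      have : x + ρ ≤ y := hy.1
      intro h
      have : y - x = 0 := h
      linarith
    · apply ContinuousOn.log (hcD_cont.continuousOn)
      intro y hy
      exact ne_of_gt (hcD_pos hx1 hx2 (by linarith [hy.1]) hy.2)
  · intro y hy
    exact hcG_deriv_right hx1 hx2 (by linarith [hy.1]) hy.2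
  · intro y hy
    have h1 : 0 < y - x := by linarith [hy.1]
    have h2 : 0 < Real.sqrt (1 - y ^ 2) := Real.sqrt_pos.mpr (by nlinarith [hy.1, hy.2, lt_trans hx1 (by linarith [hy.1] : x < y)])
    positivity

private lemma hc_integrable_left {x ρ : ℝ} (hx1 : -1 < x) (hx2 : x < 1)
    (hρ : 0 < ρ) (hρ2 : -1 ≤ x - ρ) :
    IntegrableOn (fun y => ((y - x) * Real.sqrt (1 - y ^ 2))⁻¹) (Ioc (-1) (x - ρ)) := by
  have h := intervalIntegral.integrableOn_deriv_of_nonneg (a := -1) (b := x - ρ)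
    (g := fun y => -((Real.sqrt (1 - x ^ 2))⁻¹ * (Real.log (x - y) - Real.log (hcD x y))))
    (g' := fun y => -(((y - x) * Real.sqrt (1 - y ^ 2))⁻¹)) ?_ ?_ ?_
  · have := h.neg
    simp only [Pi.neg_def, neg_neg] at this
    exact this
  · apply ContinuousOn.neg
    apply ContinuousOn.mul continuousOn_const
    apply ContinuousOn.sub
    · apply ContinuousOn.log ((continuous_const.sub continuous_id).continuousOn)
      intro y hy
      have : y ≤ x - ρ := hy.2
      intro h
      have : x - y = 0 := h
      linarith
    · apply ContinuousOn.log (hcD_cont.continuousOn)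
      intro y hy
      exact ne_of_gt (hcD_pos hx1 hx2 hy.1 (by linarith [hy.2]))
  · intro y hy
    exact (hcG_deriv_left hx1 hx2 hy.1 (by linarith [hy.2])).neg
  · intro y hy
    have h1 : y - x < 0 := by linarith [hy.2]
    have h2 : 0 < Real.sqrt (1 - y ^ 2) := Real.sqrt_pos.mpr
      (by nlinarith [hy.1, hy.2, lt_of_le_of_lt (by linarith [hy.2] : y ≤ x - ρ) (by linarith : x - ρ < 1)])
    have : (y - x) * Real.sqrt (1 - y ^ 2) < 0 := mul_neg_of_neg_of_pos h1 h2
    simp only [neg_nonneg]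
    exact le_of_lt (inv_lt_zero.mpr this)

private lemma hc_J {x ρ : ℝ} (hx1 : -1 < x) (hx2 : x < 1)
    (hρ : 0 < ρ) (hρ1 : ρ < 1 - x) (hρ2 : ρ < x + 1) :
    ∫ y in {y : ℝ | y ∈ Ioo (-1 : ℝ) 1 ∧ ρ < |y - x|},
        ((y - x) * Real.sqrt (1 - y ^ 2))⁻¹
      = (Real.sqrt (1 - x ^ 2))⁻¹ * (Real.log (hcD x (x + ρ)) - Real.log (hcD x (x - ρ))) := by
  have hle1 : x + ρ ≤ 1 := by linarith
  have hle2 : -1 ≤ x - ρ := by linarith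
  set G : ℝ → ℝ := fun y => (Real.sqrt (1 - x ^ 2))⁻¹ * (Real.log (y - x) - Real.log (hcD x y))
    with hG
  set Gt : ℝ → ℝ := fun y => (Real.sqrt (1 - x ^ 2))⁻¹ * (Real.log (x - y) - Real.log (hcD x y))
    with hGt
  have hIright := hc_integrable_right hx1 hx2 hρ hle1
  have hIleft := hc_integrable_left hx1 hx2 hρ hle2
  -- FTC right
  have hR : ∫ y in (x + ρ)..1, ((y - x) * Real.sqrt (1 - y ^ 2))⁻¹ = G 1 - G (x + ρ) := by
    apply intervalIntegral.integral_eq_sub_of_hasDeriv_right_of_le hle1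
    · apply ContinuousOn.mul continuousOn_const
      apply ContinuousOn.sub
      · apply ContinuousOn.log ((continuous_id.sub continuous_const).continuousOn)
        intro y hy
        have : x + ρ ≤ y := hy.1
        intro h
        have : y - x = 0 := h
        linarith
      · apply ContinuousOn.log (hcD_cont.continuousOn)
        intro y hy
        exact ne_of_gt (hcD_pos hx1 hx2 (by linarith [hy.1]) hy.2)
    · intro y hy
      exact (hcG_deriv_right hx1 hx2 (by linarith [hy.1]) hy.2).hasDerivWithinAt
    · exact (intervalIntegrable_iff_integrableOn_Ioc_of_le hle1).mpr hIright
  -- FTC left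
  have hL : ∫ y in (-1 : ℝ)..(x - ρ), ((y - x) * Real.sqrt (1 - y ^ 2))⁻¹
      = Gt (x - ρ) - Gt (-1) := by
    apply intervalIntegral.integral_eq_sub_of_hasDeriv_right_of_le hle2
    · apply ContinuousOn.mul continuousOn_const
      apply ContinuousOn.sub
      · apply ContinuousOn.log ((continuous_const.sub continuous_id).continuousOn)
        intro y hy
        have : y ≤ x - ρ := hy.2
        intro h
        have : x - y = 0 := h
        linarith
      · apply ContinuousOn.log (hcD_cont.continuousOn)
        intro y hy
        exact ne_of_gt (hcD_pos hx1 hx2 hy.1 (by linarith [hy.2]))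
    · intro y hy
      exact (hcG_deriv_left hx1 hx2 hy.1 (by linarith [hy.2])).hasDerivWithinAt
    · exact (intervalIntegrable_iff_integrableOn_Ioc_of_le hle2).mpr hIleft
  -- split the set integral
  rw [hc_S_eq hx1 hx2 (le_of_lt hρ)]
  rw [setIntegral_union (by
      apply Set.disjoint_left.mpr
      intro y hy1 hy2
      exact absurd (lt_trans hy1.2 (by linarith [hy2.1] : x - ρ < y)) (lt_irrefl y)
      ) measurableSet_Ioo
      (hIleft.mono_set Ioo_subset_Ioc_self) (hIright.mono_set Ioo_subset_Ioc_self)]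
  have e1 : ∫ y in Ioo (-1 : ℝ) (x - ρ), ((y - x) * Real.sqrt (1 - y ^ 2))⁻¹
      = Gt (x - ρ) - Gt (-1) := by
    rw [← hL, intervalIntegral.integral_of_le hle2, integral_Ioc_eq_integral_Ioo]
  have e2 : ∫ y in Ioo (x + ρ) 1, ((y - x) * Real.sqrt (1 - y ^ 2))⁻¹ = G 1 - G (x + ρ) := by
    rw [← hR, intervalIntegral.integral_of_le hle1, integral_Ioc_eq_integral_Ioo]
  rw [e1, e2]
  have hD1 : hcD x 1 = 1 - x := by
    unfold hcD; norm_num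
  have hDm1 : hcD x (-1) = 1 + x := by
    unfold hcD
    norm_num
  have hGt1 : Gt (-1) = 0 := by
    rw [hGt]; simp only [hDm1]
    rw [show x - (-1) = 1 + x by ring]
    simp
  have hG1 : G 1 = 0 := by
    rw [hG]; simp only [hD1]
    simp
  rw [hGt1, hG1, hG, hGt]
  simp only [show x - (x - ρ) = ρ by ring, show x + ρ - x = ρ by ring]
  ring

private lemma hc_integrable_g0 {x : ℝ} :
    IntegrableOn (fun y : ℝ => (y + x) * (Real.sqrt (1 - y ^ 2))⁻¹) (Ioo (-1 : ℝ) 1) := by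
  apply Integrable.mono' (g := fun y : ℝ => (1 + |x|) * (Real.sqrt (1 - y ^ 2))⁻¹)
    (hc_integrable_inv_sqrt.const_mul _)
  · exact (((measurable_id.add_const x).mul
      ((Real.continuous_sqrt.comp (by fun_prop)).measurable.inv)).aestronglyMeasurable).restrict
  · rw [ae_restrict_iff' measurableSet_Ioo]
    refine Eventually.of_forall fun y hy => ?_
    have h1 : |y + x| ≤ 1 + |x| := by
      have := abs_add_le y x
      have : |y| ≤ 1 := by rw [abs_le]; exact ⟨le_of_lt hy.1, le_of_lt hy.2⟩
      calc |y + x| ≤ |y| + |x| := abs_add_le y x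
        _ ≤ 1 + |x| := by linarith
    have h2 : (0:ℝ) ≤ (Real.sqrt (1 - y ^ 2))⁻¹ := by positivity
    rw [Real.norm_eq_abs, abs_mul, abs_inv, abs_of_nonneg (Real.sqrt_nonneg _)]
    exact mul_le_mul_of_nonneg_right h1 h2 |>.trans (le_refl _)

private lemma hc_int_g0 {x : ℝ} :
    ∫ y in Ioo (-1 : ℝ) 1, (y + x) * (Real.sqrt (1 - y ^ 2))⁻¹ = Real.pi * x := by
  have hw : ∀ y ∈ Ioo (-1:ℝ) 1, (0:ℝ) < Real.sqrt (1 - y ^ 2) := fun y hy =>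
    Real.sqrt_pos.mpr (by nlinarith [hy.1, hy.2])
  have hint1 : IntegrableOn (fun y : ℝ => y * (Real.sqrt (1 - y ^ 2))⁻¹) (Ioo (-1:ℝ) 1) := by
    have := hc_integrable_g0 (x := 0)
    simpa using this
  have hint2 := hc_integrable_inv_sqrt
  -- value of ∫ y * (√(1-y^2))⁻¹ = 0
  have hv1 : ∫ y in Ioo (-1:ℝ) 1, y * (Real.sqrt (1 - y ^ 2))⁻¹ = 0 := by
    have hFTC : ∫ y in (-1:ℝ)..1, y * (Real.sqrt (1 - y ^ 2))⁻¹
        = (fun y : ℝ => -Real.sqrt (1 - y ^ 2)) 1 - (fun y : ℝ => -Real.sqrt (1 - y ^ 2)) (-1) := by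
      apply intervalIntegral.integral_eq_sub_of_hasDeriv_right_of_le
        (f := fun y : ℝ => -Real.sqrt (1 - y ^ 2)) (by norm_num)
      · exact (Real.continuous_sqrt.comp (by fun_prop)).neg.continuousOn
      · intro y hy
        have hne : (1:ℝ) - y ^ 2 ≠ 0 := by nlinarith [hy.1, hy.2]
        have h1 : HasDerivAt (fun y : ℝ => 1 - y ^ 2) (-2 * y) y := by
          simpa using ((hasDerivAt_pow 2 y).const_sub 1)
        have h2 := ((Real.hasDerivAt_sqrt hne).comp y h1).neg
        have heq : y * (Real.sqrt (1 - y ^ 2))⁻¹ = -(1 / (2 * Real.sqrt (1 - y ^ 2)) * (-2 * y)) := by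
          have := hw y hy
          field_simp
        rw [heq]
        exact h2.hasDerivWithinAt
      · rw [intervalIntegrable_iff_integrableOn_Ioc_of_le (by norm_num)]
        rw [integrableOn_Ioc_iff_integrableOn_Ioo]
        exact hint1
    rw [← integral_Ioc_eq_integral_Ioo, ← intervalIntegral.integral_of_le (by norm_num : (-1:ℝ) ≤ 1)]
    rw [hFTC]
    norm_num
  have hv2 : ∫ y in Ioo (-1:ℝ) 1, (Real.sqrt (1 - y ^ 2))⁻¹ = Real.pi := by
    have hFTC : ∫ y in (-1:ℝ)..1, (Real.sqrt (1 - y ^ 2))⁻¹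
        = Real.arcsin 1 - Real.arcsin (-1) := by
      apply intervalIntegral.integral_eq_sub_of_hasDeriv_right_of_le (by norm_num)
      · exact Real.continuous_arcsin.continuousOn
      · intro y hy
        have := Real.hasDerivAt_arcsin (ne_of_gt hy.1) (ne_of_lt hy.2)
        rw [show (Real.sqrt (1 - y ^ 2))⁻¹ = 1 / Real.sqrt (1 - y ^ 2) by rw [one_div]]
        exact this.hasDerivWithinAt
      · rw [intervalIntegrable_iff_integrableOn_Ioc_of_le (by norm_num)]
        rw [integrableOn_Ioc_iff_integrableOn_Ioo]
        exact hint2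
    rw [← integral_Ioc_eq_integral_Ioo, ← intervalIntegral.integral_of_le (by norm_num : (-1:ℝ) ≤ 1)]
    rw [hFTC, Real.arcsin_one, Real.arcsin_neg_one]
    ring
  have hsplit : ∀ y : ℝ, (y + x) * (Real.sqrt (1 - y ^ 2))⁻¹
      = y * (Real.sqrt (1 - y ^ 2))⁻¹ + x * (Real.sqrt (1 - y ^ 2))⁻¹ := fun y => by ring
  simp only [hsplit]
  rw [integral_add hint1 (hint2.const_mul x), hv1, integral_const_mul, hv2]
  ring

private lemma hc_base0 {x : ℝ} (hx1 : -1 < x) (hx2 : x < 1) :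
    Tendsto (fun ρ : ℝ => ∫ y in {y : ℝ | y ∈ Ioo (-1 : ℝ) 1 ∧ ρ < |y - x|},
        Real.sqrt (1 - y ^ 2) / (y - x))
      (nhdsWithin 0 (Set.Ioi 0)) (nhds (-(Real.pi * x))) := by
  set ε : ℝ := min (1 - x) (x + 1) with hε
  have hεpos : 0 < ε := lt_min (by linarith) (by linarith)
  -- the eventual identity
  have hev : ∀ᶠ ρ in nhdsWithin (0:ℝ) (Set.Ioi 0),
      (∫ y in {y : ℝ | y ∈ Ioo (-1 : ℝ) 1 ∧ ρ < |y - x|}, Real.sqrt (1 - y ^ 2) / (y - x))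
        = (1 - x ^ 2) * ((Real.sqrt (1 - x ^ 2))⁻¹
            * (Real.log (hcD x (x + ρ)) - Real.log (hcD x (x - ρ))))
          - ∫ y in {y : ℝ | y ∈ Ioo (-1 : ℝ) 1 ∧ ρ < |y - x|},
              (y + x) * (Real.sqrt (1 - y ^ 2))⁻¹ := by
    filter_upwards [Ioo_mem_nhdsGT_of_mem (Set.left_mem_Ico.mpr hεpos)] with ρ hρ
    have hρ0 : 0 < ρ := hρ.1
    have hρ1 : ρ < 1 - x := lt_of_lt_of_le hρ.2 (min_le_left _ _)
    have hρ2 : ρ < x + 1 := lt_of_lt_of_le hρ.2 (min_le_right _ _)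
    have hIinv : IntegrableOn (fun y => ((y - x) * Real.sqrt (1 - y ^ 2))⁻¹)
        {y : ℝ | y ∈ Ioo (-1 : ℝ) 1 ∧ ρ < |y - x|} := by
      rw [hc_S_eq hx1 hx2 (le_of_lt hρ0)]
      exact ((hc_integrable_left hx1 hx2 hρ0 (by linarith)).mono_set Ioo_subset_Ioc_self).union
        ((hc_integrable_right hx1 hx2 hρ0 (by linarith)).mono_set Ioo_subset_Ioc_self)
    have hIg0 : IntegrableOn (fun y : ℝ => (y + x) * (Real.sqrt (1 - y ^ 2))⁻¹)
        {y : ℝ | y ∈ Ioo (-1 : ℝ) 1 ∧ ρ < |y - x|} :=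
      hc_integrable_g0.mono_set (fun y hy => hy.1)
    have hpt : ∀ y ∈ {y : ℝ | y ∈ Ioo (-1 : ℝ) 1 ∧ ρ < |y - x|},
        Real.sqrt (1 - y ^ 2) / (y - x)
          = (1 - x ^ 2) * ((y - x) * Real.sqrt (1 - y ^ 2))⁻¹
            - (y + x) * (Real.sqrt (1 - y ^ 2))⁻¹ := by
      rintro y ⟨hy, hyx⟩
      have hw : 0 < Real.sqrt (1 - y ^ 2) := Real.sqrt_pos.mpr (by nlinarith [hy.1, hy.2])
      have hw2 : Real.sqrt (1 - y ^ 2) ^ 2 = 1 - y ^ 2 := Real.sq_sqrt (by nlinarith [hy.1, hy.2])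
      have hyx0 : y - x ≠ 0 := by
        intro h
        rw [h] at hyx
        simp at hyx
        linarith
      set w := Real.sqrt (1 - y ^ 2)
      field_simp
      linear_combination hw2
    rw [setIntegral_congr_fun hc_S_meas hpt,
      integral_sub (hIinv.const_mul _) hIg0, integral_const_mul,
      hc_J hx1 hx2 hρ0 hρ1 hρ2]
  apply Tendsto.congr' (Filter.EventuallyEq.symm hev)
  -- limit of first term is 0
  have hDxx : 0 < hcD x x := hcD_pos hx1 hx2 (le_of_lt hx1) (le_of_lt hx2)
  have hlog : ContinuousAt (fun y => Real.log (hcD x y)) x :=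
    (Real.continuousAt_log (ne_of_gt hDxx)).comp hcD_cont.continuousAt
  have hplus : Tendsto (fun ρ : ℝ => x + ρ) (nhdsWithin 0 (Set.Ioi 0)) (nhds x) := by
    have : Tendsto (fun ρ : ℝ => x + ρ) (nhds 0) (nhds (x + 0)) :=
      (continuous_const.add continuous_id).tendsto 0
    rw [add_zero] at this
    exact this.mono_left nhdsWithin_le_nhds
  have hminus : Tendsto (fun ρ : ℝ => x - ρ) (nhdsWithin 0 (Set.Ioi 0)) (nhds x) := by
    have : Tendsto (fun ρ : ℝ => x - ρ) (nhds 0) (nhds (x - 0)) :=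
      (continuous_const.sub continuous_id).tendsto 0
    rw [sub_zero] at this
    exact this.mono_left nhdsWithin_le_nhds
  have t1 : Tendsto (fun ρ : ℝ => Real.log (hcD x (x + ρ)) - Real.log (hcD x (x - ρ)))
      (nhdsWithin 0 (Set.Ioi 0)) (nhds 0) := by
    have := (hlog.tendsto.comp hplus).sub (hlog.tendsto.comp hminus)
    rwa [sub_self] at this
  have t2 : Tendsto (fun ρ : ℝ => (1 - x ^ 2) * ((Real.sqrt (1 - x ^ 2))⁻¹
      * (Real.log (hcD x (x + ρ)) - Real.log (hcD x (x - ρ)))))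
      (nhdsWithin 0 (Set.Ioi 0)) (nhds 0) := by
    have := (t1.const_mul (Real.sqrt (1 - x ^ 2))⁻¹).const_mul (1 - x ^ 2)
    simpa using this
  have t3 := hc_shrink (x := x) (hc_integrable_g0 (x := x))
  rw [hc_int_g0] at t3
  have := t2.sub t3
  rw [zero_sub] at this
  exact this

private lemma hc_cont_U (k : ℕ) :
    Continuous (fun y : ℝ => (Polynomial.Chebyshev.U ℝ k).eval y * Real.sqrt (1 - y ^ 2)) :=
  (Polynomial.continuous _).mul (Real.continuous_sqrt.comp (by fun_prop))

private lemma hc_main {x : ℝ} (hx1 : -1 < x) (hx2 : x < 1) (n : ℕ) :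
    Tendsto (fun ρ : ℝ => ∫ y in {y : ℝ | y ∈ Ioo (-1 : ℝ) 1 ∧ ρ < |y - x|},
        (Polynomial.Chebyshev.U ℝ n).eval y * Real.sqrt (1 - y ^ 2) / (y - x))
      (nhdsWithin 0 (Set.Ioi 0))
      (nhds (-(Real.pi * (Polynomial.Chebyshev.T ℝ (n + 1)).eval x))) := by
  induction n using Nat.twoStepInduction with
  | zero =>
    have h := hc_base0 hx1 hx2
    have he : ∀ ρ : ℝ, (∫ y in {y : ℝ | y ∈ Ioo (-1 : ℝ) 1 ∧ ρ < |y - x|},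
        (Polynomial.Chebyshev.U ℝ (0:ℕ)).eval y * Real.sqrt (1 - y ^ 2) / (y - x))
        = ∫ y in {y : ℝ | y ∈ Ioo (-1 : ℝ) 1 ∧ ρ < |y - x|},
            Real.sqrt (1 - y ^ 2) / (y - x) := by
      intro ρ
      congr 1
      ext y
      norm_num [Polynomial.Chebyshev.U_zero]
    simp only [he]
    convert h using 2
    norm_num [Polynomial.Chebyshev.T_one]
  | one =>
    -- n = 1
    have hB := hc_shrink (x := x) ((hc_cont_U 0).integrableOn_Icc.mono_set Ioo_subset_Icc_self)
    rw [hc_intU (m := 0)] at hB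
    simp only [if_pos rfl] at hB
    have hA0 : Tendsto (fun ρ : ℝ => ∫ y in {y : ℝ | y ∈ Ioo (-1 : ℝ) 1 ∧ ρ < |y - x|},
        (Polynomial.Chebyshev.U ℝ (0:ℕ)).eval y * Real.sqrt (1 - y ^ 2) / (y - x))
        (nhdsWithin 0 (Set.Ioi 0)) (nhds (-(Real.pi * x))) := by
      have h := hc_base0 hx1 hx2
      have he : ∀ ρ : ℝ, (∫ y in {y : ℝ | y ∈ Ioo (-1 : ℝ) 1 ∧ ρ < |y - x|},
          (Polynomial.Chebyshev.U ℝ (0:ℕ)).eval y * Real.sqrt (1 - y ^ 2) / (y - x))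
          = ∫ y in {y : ℝ | y ∈ Ioo (-1 : ℝ) 1 ∧ ρ < |y - x|},
              Real.sqrt (1 - y ^ 2) / (y - x) := by
        intro ρ
        congr 1
        ext y
        norm_num [Polynomial.Chebyshev.U_zero]
      simp only [he]
      exact h
    have hcomb := (hB.const_mul (2:ℝ)).add (hA0.const_mul (2*x))
    apply Tendsto.congr' _ (by
      convert hcomb using 2
      rw [show ((1:ℕ):ℤ) + 1 = 2 by norm_num, Polynomial.Chebyshev.T_two]
      simp
      ring)
    filter_upwards [self_mem_nhdsWithin] with ρ (hρ : 0 < ρ)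
    have hpt : ∀ y ∈ {y : ℝ | y ∈ Ioo (-1 : ℝ) 1 ∧ ρ < |y - x|},
        (2:ℝ) * ((Polynomial.Chebyshev.U ℝ (0:ℕ)).eval y * Real.sqrt (1 - y ^ 2))
          + (2*x) * ((Polynomial.Chebyshev.U ℝ (0:ℕ)).eval y * Real.sqrt (1 - y ^ 2) / (y - x))
        = (Polynomial.Chebyshev.U ℝ (1:ℕ)).eval y * Real.sqrt (1 - y ^ 2) / (y - x) := by
      rintro y ⟨hy, hyx⟩
      have hyx0 : y - x ≠ 0 := by
        intro h; rw [h] at hyx; simp at hyx; linarith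
      have hU0 : (Polynomial.Chebyshev.U ℝ ((0:ℕ):ℤ)).eval y = 1 := by
        norm_num [Polynomial.Chebyshev.U_zero]
      have hU1 : (Polynomial.Chebyshev.U ℝ ((1:ℕ):ℤ)).eval y = 2*y := by
        norm_num [Polynomial.Chebyshev.U_one]
      rw [hU0, hU1]
      field_simp
      ring
    calc (2:ℝ) * (∫ y in {y : ℝ | y ∈ Ioo (-1 : ℝ) 1 ∧ ρ < |y - x|},
          (Polynomial.Chebyshev.U ℝ (0:ℕ)).eval y * Real.sqrt (1 - y ^ 2))
        + (2*x) * (∫ y in {y : ℝ | y ∈ Ioo (-1 : ℝ) 1 ∧ ρ < |y - x|},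
          (Polynomial.Chebyshev.U ℝ (0:ℕ)).eval y * Real.sqrt (1 - y ^ 2) / (y - x))
        = ∫ y in {y : ℝ | y ∈ Ioo (-1 : ℝ) 1 ∧ ρ < |y - x|},
            ((2:ℝ) * ((Polynomial.Chebyshev.U ℝ (0:ℕ)).eval y * Real.sqrt (1 - y ^ 2))
             + (2*x) * ((Polynomial.Chebyshev.U ℝ (0:ℕ)).eval y * Real.sqrt (1 - y ^ 2) / (y - x))) := by
          rw [integral_add ((hc_integrableOn_S (hc_cont_U 0)).const_mul 2)
            ((hc_integrableOn_div hρ (hc_cont_U 0)).const_mul (2*x)),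
            integral_const_mul, integral_const_mul]
      _ = _ := setIntegral_congr_fun hc_S_meas hpt
  | more n ih ih1 =>
    have hB := hc_shrink (x := x)
      ((hc_cont_U (n+1)).integrableOn_Icc.mono_set Ioo_subset_Icc_self)
    rw [hc_intU (m := n+1)] at hB
    simp only [if_neg (Nat.succ_ne_zero n)] at hB
    have hcomb := ((hB.const_mul (2:ℝ)).add (ih1.const_mul (2*x))).sub ih
    apply Tendsto.congr' _ (by
      convert hcomb using 2
      have hT := Polynomial.Chebyshev.T_add_two ℝ ((n:ℤ)+1)
      have hcast : ((n+2:ℕ):ℤ) + 1 = ((n:ℤ)+1) + 2 := by push_cast; ring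
      have hcast2 : ((n+1:ℕ):ℤ) + 1 = ((n:ℤ)+1) + 1 := by push_cast; ring
      rw [hcast, hT, hcast2]
      simp only [Polynomial.eval_sub, Polynomial.eval_mul, Polynomial.eval_X,
        Polynomial.eval_ofNat]
      ring)
    filter_upwards [self_mem_nhdsWithin] with ρ (hρ : 0 < ρ)
    have hpt : ∀ y ∈ {y : ℝ | y ∈ Ioo (-1 : ℝ) 1 ∧ ρ < |y - x|},
        ((2:ℝ) * ((Polynomial.Chebyshev.U ℝ (n+1:ℕ)).eval y * Real.sqrt (1 - y ^ 2))
          + (2*x) * ((Polynomial.Chebyshev.U ℝ (n+1:ℕ)).eval y * Real.sqrt (1 - y ^ 2) / (y - x)))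
          - (Polynomial.Chebyshev.U ℝ (n:ℕ)).eval y * Real.sqrt (1 - y ^ 2) / (y - x)
        = (Polynomial.Chebyshev.U ℝ (n+2:ℕ)).eval y * Real.sqrt (1 - y ^ 2) / (y - x) := by
      rintro y ⟨hy, hyx⟩
      have hyx0 : y - x ≠ 0 := by
        intro h; rw [h] at hyx; simp at hyx; linarith
      have hU := Polynomial.Chebyshev.U_add_two ℝ (n:ℤ)
      have hcast : ((n+2:ℕ):ℤ) = (n:ℤ) + 2 := by push_cast; ring
      have hcast2 : ((n+1:ℕ):ℤ) = (n:ℤ) + 1 := by push_cast; ring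
      have hUe : (Polynomial.Chebyshev.U ℝ ((n+2:ℕ):ℤ)).eval y
          = 2 * y * (Polynomial.Chebyshev.U ℝ ((n+1:ℕ):ℤ)).eval y
            - (Polynomial.Chebyshev.U ℝ ((n:ℕ):ℤ)).eval y := by
        rw [hcast, hU, hcast2]
        simp
      rw [hUe]
      field_simp
      ring
    calc ((2:ℝ) * (∫ y in {y : ℝ | y ∈ Ioo (-1 : ℝ) 1 ∧ ρ < |y - x|},
          (Polynomial.Chebyshev.U ℝ (n+1:ℕ)).eval y * Real.sqrt (1 - y ^ 2))
        + (2*x) * (∫ y in {y : ℝ | y ∈ Ioo (-1 : ℝ) 1 ∧ ρ < |y - x|},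
          (Polynomial.Chebyshev.U ℝ (n+1:ℕ)).eval y * Real.sqrt (1 - y ^ 2) / (y - x)))
        - (∫ y in {y : ℝ | y ∈ Ioo (-1 : ℝ) 1 ∧ ρ < |y - x|},
          (Polynomial.Chebyshev.U ℝ (n:ℕ)).eval y * Real.sqrt (1 - y ^ 2) / (y - x))
        = ∫ y in {y : ℝ | y ∈ Ioo (-1 : ℝ) 1 ∧ ρ < |y - x|},
            (((2:ℝ) * ((Polynomial.Chebyshev.U ℝ (n+1:ℕ)).eval y * Real.sqrt (1 - y ^ 2))
             + (2*x) * ((Polynomial.Chebyshev.U ℝ (n+1:ℕ)).eval y * Real.sqrt (1 - y ^ 2) / (y - x)))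
             - (Polynomial.Chebyshev.U ℝ (n:ℕ)).eval y * Real.sqrt (1 - y ^ 2) / (y - x)) := by
          have hiA : IntegrableOn (fun y : ℝ =>
              (2:ℝ) * ((Polynomial.Chebyshev.U ℝ (n+1:ℕ)).eval y * Real.sqrt (1 - y ^ 2)))
              {y : ℝ | y ∈ Ioo (-1 : ℝ) 1 ∧ ρ < |y - x|} :=
            (hc_integrableOn_S (hc_cont_U (n+1))).const_mul 2
          have hiB : IntegrableOn (fun y : ℝ =>
              (2*x) * ((Polynomial.Chebyshev.U ℝ (n+1:ℕ)).eval y * Real.sqrt (1 - y ^ 2) / (y - x)))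
              {y : ℝ | y ∈ Ioo (-1 : ℝ) 1 ∧ ρ < |y - x|} :=
            (hc_integrableOn_div hρ (hc_cont_U (n+1))).const_mul (2*x)
          have hiAB : IntegrableOn (fun y : ℝ =>
              (2:ℝ) * ((Polynomial.Chebyshev.U ℝ (n+1:ℕ)).eval y * Real.sqrt (1 - y ^ 2))
              + (2*x) * ((Polynomial.Chebyshev.U ℝ (n+1:ℕ)).eval y * Real.sqrt (1 - y ^ 2) / (y - x)))
              {y : ℝ | y ∈ Ioo (-1 : ℝ) 1 ∧ ρ < |y - x|} := by
            exact hiA.add hiB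
          rw [integral_sub hiAB (hc_integrableOn_div hρ (hc_cont_U n)),
            integral_add hiA hiB, integral_const_mul, integral_const_mul]
      _ = _ := setIntegral_congr_fun hc_S_meas hpt

theorem hilbert_transform_weighted_chebyshevU (n : ℕ) (x : ℝ)
    (hx : x ∈ Set.Ioo (-1 : ℝ) 1) :
    Tendsto (fun ρ : ℝ =>
        (1 / Real.pi) * ∫ y in {y : ℝ | y ∈ Set.Ioo (-1 : ℝ) 1 ∧ ρ < |y - x|},
          (Polynomial.Chebyshev.U ℝ n).eval y * Real.sqrt (1 - y ^ 2) / (y - x))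
      (nhdsWithin 0 (Set.Ioi 0))
      (nhds (-(Polynomial.Chebyshev.T ℝ (n + 1)).eval x)) := by
  have h := (hc_main hx.1 hx.2 n).const_mul (1 / Real.pi)
  convert h using 2
  field_simp
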